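/- arXiv:1011.2267 — 3 statements merged into one kernel-verified Lean document; each statement's English description precedes it below -/
import Mathlib

section
/- Let r : [t₀,∞) → ℝ be differentiable and satisfy r'(t) = 1 - 2M/r(t) + E(t) with |E(t)| ≤ C r(t)^{-2}, r(t₀) > 4M > 0, and r(t) → ∞ as t → ∞. Then r(t) = t - 2M log t + O(1) as t → ∞. -/
open Filter Set

private lemma mono_aux' {a : ℝ} {f f' : ℝ → ℝ}
    (hd : ∀ t ∈ Set.Ici a, HasDerivAt f (f' t) t)
    (h0 : ∀ t ∈ Set.Ici a, 0 ≤ f' t) : MonotoneOn f (Set.Ici a) := by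
  apply monotoneOn_of_deriv_nonneg (convex_Ici a)
  · exact fun t ht => (hd t ht).continuousAt.continuousWithinAt
  · intro t ht
    rw [interior_Ici] at ht
    exact (hd t (mem_Ici.2 (mem_Ioi.1 ht).le)).differentiableAt.differentiableWithinAt
  · intro t ht
    rw [interior_Ici] at ht
    rw [(hd t (mem_Ici.2 (mem_Ioi.1 ht).le)).deriv]
    exact h0 t (mem_Ici.2 (mem_Ioi.1 ht).le)

/-- If `r' = 1 - 2M/r + E` with `|E(t)| ≤ C r(t)⁻²`, `r(t₀) > 4M > 0` and `r → ∞`,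
then `r(t) = t - 2M log t + O(1)` as `t → ∞`. -/
theorem area_radius_asymptotics (M C t₀ : ℝ) (hM : 0 < M) (hC : 0 < C)
    (r E : ℝ → ℝ)
    (hrpos : ∀ t ≥ t₀, 0 < r t)
    (hr0 : 4 * M < r t₀)
    (hE : ∀ t ≥ t₀, |E t| ≤ C * (r t)⁻¹ ^ 2)
    (hderiv : ∀ t ≥ t₀, HasDerivAt r (1 - 2 * M / r t + E t) t)
    (hinf : Tendsto r atTop atTop) :
    ∃ B : ℝ, ∀ᶠ t in atTop, |r t - (t - 2 * M * Real.log t)| ≤ B := by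
  obtain ⟨t₂, ht₂⟩ := eventually_atTop.1
    ((hinf.eventually_ge_atTop (8*M + 4*C + 1)).and (eventually_ge_atTop (max t₀ 0)))
  obtain ⟨T, hT⟩ : ∃ T : ℝ, T = max t₂ 0 := ⟨_, rfl⟩
  have hT0 : (0:ℝ) ≤ T := hT ▸ le_max_right _ _
  -- base properties for t ≥ T
  have hbase : ∀ t, T ≤ t → 0 < r t ∧ 2*M/r t ≤ 1/4 ∧ C/(r t)^2 ≤ 1/4 ∧
      |E t| ≤ C/(r t)^2 ∧ 1 ≤ r t ∧ t₀ ≤ t ∧ 0 ≤ t := by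
    intro t ht
    rw [hT] at ht
    have h := ht₂ t (le_trans (le_max_left _ _) ht)
    have ht0' : t₀ ≤ t := le_trans (le_max_left _ _) h.2
    have htpos : (0:ℝ) ≤ t := le_trans (le_max_right _ _) h.2
    have hr8 : 8*M + 4*C + 1 ≤ r t := h.1
    have hrt : 0 < r t := hrpos t ht0'
    have hr1 : 1 ≤ r t := by nlinarith
    refine ⟨hrt, ?_, ?_, ?_, hr1, ht0', htpos⟩
    · rw [div_le_iff₀ hrt]; nlinarith
    · rw [div_le_iff₀ (by positivity)]
      have := mul_nonneg (by linarith : (0:ℝ) ≤ r t - 1) (by linarith : (0:ℝ) ≤ r t - 4*C)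
      nlinarith
    · have h' := hE t ht0'
      rwa [inv_pow, ← div_eq_mul_inv] at h'
  -- r grows at least like t/2 beyond T
  have hmono1 : MonotoneOn (fun t => r t - t/2) (Set.Ici T) := by
    apply mono_aux' (f' := fun t => (1 - 2*M/r t + E t) - 1/2)
    · intro t ht
      exact (hderiv t (hbase t ht).2.2.2.2.2.1).sub ((hasDerivAt_id t).div_const 2)
    · intro t ht
      obtain ⟨hrt, hu, hc, he, -, -, -⟩ := hbase t ht
      have he' := (abs_le.1 he).1
      linarith
  have hlow0 : ∀ t, 2*T + 1 ≤ t → t/4 ≤ r t := by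
    intro t ht
    have hTt : T ≤ t := by linarith
    have h := hmono1 (self_mem_Ici) (mem_Ici.2 hTt) hTt
    have hrT : 0 < r T := (hbase T le_rfl).1
    simp only at h
    linarith
  obtain ⟨t₃, ht₃def⟩ : ∃ x : ℝ, x = 2*T + 1 := ⟨_, rfl⟩
  have hlow : ∀ t, t₃ ≤ t → t/4 ≤ r t := fun t ht => hlow0 t (ht₃def ▸ ht)
  have ht₃1 : (1:ℝ) ≤ t₃ := by rw [ht₃def]; linarith
  have ht₃T : T ≤ t₃ := by rw [ht₃def]; linarith
  obtain ⟨K, hK⟩ : ∃ K : ℝ, K = 64*M^2 + 20*C := ⟨_, rfl⟩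
  have hK0 : 0 < K := by rw [hK]; positivity
  obtain ⟨gd, hgd⟩ : ∃ gd : ℝ → ℝ,
    gd = fun t => (1 - 2*M/r t + E t) + 2*M*((1 - 2*M/r t + E t)/r t) - 1 := ⟨_, rfl⟩
  obtain ⟨g, hgdef⟩ : ∃ g : ℝ → ℝ, g = fun t => r t + 2*M*Real.log (r t) - t := ⟨_, rfl⟩
  have hg : ∀ t ∈ Set.Ici t₃, HasDerivAt g (gd t) t := by
    intro t ht
    have hTt : T ≤ t := le_trans ht₃T ht
    have ht0' : t₀ ≤ t := (hbase t hTt).2.2.2.2.2.1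
    have hrt : 0 < r t := (hbase t hTt).1
    rw [hgdef]
    simp only [hgd]
    exact ((hderiv t ht0').add
      (((hderiv t ht0').log hrt.ne').const_mul (2*M))).sub (hasDerivAt_id t)
  have hbound : ∀ t ∈ Set.Ici t₃, |gd t| ≤ K/t^2 := by
    intro t ht
    have hTt : T ≤ t := le_trans ht₃T ht
    obtain ⟨hrt, hu, hc, he, hr1, ht0', -⟩ := hbase t hTt
    have ht1 : (1:ℝ) ≤ t := le_trans ht₃1 ht
    have htpos : (0:ℝ) < t := by linarith
    have hrt4 : t/4 ≤ r t := hlow t ht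
    have key : gd t = -(2*M/r t)^2 + E t * (1 + 2*M/r t) := by
      simp only [hgd]
      field_simp
      ring
    have hu0 : 0 ≤ 2*M/r t := by positivity
    have h1 : |gd t| ≤ (2*M/r t)^2 + |E t| * (1 + 2*M/r t) := by
      rw [key]
      refine (abs_add_le _ _).trans ?_
      rw [abs_neg, abs_of_nonneg (sq_nonneg _), abs_mul,
        abs_of_nonneg (by linarith : (0:ℝ) ≤ 1 + 2*M/r t)]
    have hA : 2*M/r t ≤ 8*M/t := by
      rw [div_le_div_iff₀ hrt htpos]
      nlinarith
    have hA2 : (2*M/r t)^2 ≤ 64*M^2/t^2 := by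
      have := pow_le_pow_left₀ hu0 hA 2
      calc (2*M/r t)^2 ≤ (8*M/t)^2 := this
        _ = 64*M^2/t^2 := by rw [div_pow]; ring_nf
    have hB : |E t| ≤ 16*C/t^2 := by
      refine he.trans ?_
      rw [div_le_div_iff₀ (by positivity) (by positivity)]
      have hsq := mul_le_mul hrt4 hrt4 (by positivity) (le_of_lt hrt)
      nlinarith
    have hB2 : |E t| * (1 + 2*M/r t) ≤ (16*C/t^2) * (5/4) := by
      apply mul_le_mul hB (by linarith) (by linarith) (by positivity)
    have : (16*C/t^2) * (5/4) = 20*C/t^2 := by ring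
    rw [this] at hB2
    have hsum : 64*M^2/t^2 + 20*C/t^2 = K/t^2 := by rw [hK, ← add_div]
    linarith
  -- g ± K/t monotone/antitone
  have hψ : MonotoneOn (fun t => g t - K * t⁻¹) (Set.Ici t₃) := by
    apply mono_aux' (f' := fun t => gd t - K * (-(t^2)⁻¹))
    · intro t ht
      have htpos : (0:ℝ) < t := lt_of_lt_of_le (by linarith) ht
      exact (hg t ht).sub ((hasDerivAt_inv htpos.ne').const_mul K)
    · intro t ht
      have h := (abs_le.1 (hbound t ht)).1
      have htpos : (0:ℝ) < t := lt_of_lt_of_le (by linarith) ht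
      have heq : K/t^2 = K * (t^2)⁻¹ := div_eq_mul_inv _ _
      rw [mul_neg, sub_neg_eq_add]
      linarith
  have hχ : MonotoneOn (fun t => -g t - K * t⁻¹) (Set.Ici t₃) := by
    apply mono_aux' (f' := fun t => -gd t - K * (-(t^2)⁻¹))
    · intro t ht
      have htpos : (0:ℝ) < t := lt_of_lt_of_le (by linarith) ht
      exact (hg t ht).neg.sub ((hasDerivAt_inv htpos.ne').const_mul K)
    · intro t ht
      have h := (abs_le.1 (hbound t ht)).2
      have htpos : (0:ℝ) < t := lt_of_lt_of_le (by linarith) ht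
      have heq : K/t^2 = K * (t^2)⁻¹ := div_eq_mul_inv _ _
      rw [mul_neg, sub_neg_eq_add]
      linarith
  obtain ⟨B₁, hB₁⟩ : ∃ x : ℝ, x = |g t₃| + K := ⟨_, rfl⟩
  have hB₁0 : 0 ≤ B₁ := by rw [hB₁]; positivity
  have hgb : ∀ t, t₃ ≤ t → |g t| ≤ B₁ := by
    intro t ht
    have ht30 : (0:ℝ) < t₃ := by linarith
    have htpos : (0:ℝ) < t := by linarith
    have h1 := hψ self_mem_Ici (mem_Ici.2 ht) ht
    have h2 := hχ self_mem_Ici (mem_Ici.2 ht) ht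
    simp only at h1 h2
    have hkt : 0 < K * t⁻¹ := by positivity
    have hkt3 : K * t₃⁻¹ ≤ K := by
      calc K * t₃⁻¹ ≤ K * 1 := by
            apply mul_le_mul_of_nonneg_left _ hK0.le
            exact inv_le_one_of_one_le₀ ht₃1
        _ = K := mul_one K
    rw [abs_le]
    constructor
    · have := neg_abs_le (g t₃); linarith
    · have := le_abs_self (g t₃); linarith
  -- final bound
  refine ⟨B₁ + 2*M*Real.log 4, ?_⟩
  filter_upwards [eventually_ge_atTop (max t₃ B₁)] with t ht
  have ht3 : t₃ ≤ t := le_trans (le_max_left _ _) ht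
  have htB : B₁ ≤ t := le_trans (le_max_right _ _) ht
  have hTt : T ≤ t := le_trans ht₃T ht3
  obtain ⟨hrt, -, -, -, hr1, -, -⟩ := hbase t hTt
  have htpos : (0:ℝ) < t := by linarith [ht₃1]
  have hrt4 : t/4 ≤ r t := hlow t ht3
  have hgbt := hgb t ht3
  have hlogr0 : 0 ≤ Real.log (r t) := Real.log_nonneg hr1
  have hrup : r t ≤ t + B₁ := by
    have := (abs_le.1 hgbt).2
    simp only [hgdef] at this
    nlinarith
  have hrup2 : r t ≤ 2*t := by linarith
  have hlogup : Real.log (r t) ≤ Real.log 2 + Real.log t := by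
    have h := Real.log_le_log hrt hrup2
    rwa [Real.log_mul (by norm_num) htpos.ne'] at h
  have hlogdown : Real.log t - Real.log 4 ≤ Real.log (r t) := by
    have h := Real.log_le_log (by positivity) hrt4
    rwa [Real.log_div htpos.ne' (by norm_num)] at h
  have hlog24 : Real.log 2 ≤ Real.log 4 := Real.log_le_log (by norm_num) (by norm_num)
  have hlogabs : |Real.log t - Real.log (r t)| ≤ Real.log 4 := by
    rw [abs_le]; constructor <;> linarith
  have hexpand : r t - (t - 2*M*Real.log t) = g t + 2*M*(Real.log t - Real.log (r t)) := by
    simp only [hgdef]; ring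
  rw [hexpand]
  calc |g t + 2*M*(Real.log t - Real.log (r t))|
      ≤ |g t| + |2*M*(Real.log t - Real.log (r t))| := abs_add_le _ _
    _ ≤ B₁ + 2*M*Real.log 4 := by
        rw [abs_mul, abs_of_nonneg (by positivity : (0:ℝ) ≤ 2*M)]
        have := mul_le_mul_of_nonneg_left hlogabs (by positivity : (0:ℝ) ≤ 2*M)
        linarith
end

section
/- Let x : ℝ → ℝ² be twice differentiable with ẍ(t) = (d₀/r)·(-1/4)·A(t)·e, where A : ℝ → M₂(ℝ) takes values in symmetric traceless matrices with A = -4Ξ', Ξ(t) → 0 as t → ±∞, Ξ = -Σ', Σ(t) → Σ^∓ as t → ∓∞, and initial conditions x(t) → d₀ e, ẋ(t) → 0 as t → -∞ (e a fixed unit vector). Then ẋ(t) = (d₀/r)Ξ(t)e for all t, ẋ(t) → 0 as t → +∞, and the permanent displacement is lim_{t→∞} x(t) - d₀ e = -(d₀/r) (Σ⁺ - Σ⁻) e. -/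
open Filter

private lemma aux_deriv (e : Fin 2 → ℝ) (c : ℝ) {f : ℝ → Fin 2 → Fin 2 → ℝ}
    {f' : Fin 2 → Fin 2 → ℝ} {t : ℝ} (h : HasDerivAt f f' t) :
    HasDerivAt (fun s => c • fun i => ∑ j, f s i j * e j)
      (c • fun i => ∑ j, f' i j * e j) t := by
  apply HasDerivAt.fun_const_smul
  rw [hasDerivAt_pi]
  intro i
  apply HasDerivAt.fun_sum
  intro j _
  exact ((hasDerivAt_pi.mp ((hasDerivAt_pi.mp h) i)) j).mul_const _

private lemma aux_cont (c : ℝ) (e : Fin 2 → ℝ) :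
    Continuous fun (M : Fin 2 → Fin 2 → ℝ) => c • fun i => ∑ j, M i j * e j := by
  apply Continuous.fun_const_smul
  apply continuous_pi; intro i
  exact continuous_finset_sum _ fun j _ =>
    (((continuous_apply j).comp (continuous_apply i)).fun_mul continuous_const)

/-- Test-mass motion in the wave experiment: if `ẍ = (d₀/r)·(-1/4)·A·e` with `A = -4Ξ'`,
`Ξ → 0` at `±∞`, `Ξ = -Σ'`, `Σ → Σ^∓` at `∓∞`, and `x → d₀e`, `ẋ → 0` as `t → -∞`, then
`ẋ(t) = (d₀/r)Ξ(t)e` for all `t`, `ẋ → 0` at `+∞`, and the permanent displacement is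
`lim x - d₀e = -(d₀/r)(Σ⁺ - Σ⁻)e`. -/
theorem permanent_displacement (d₀ r : ℝ) (hd : 0 < d₀) (hr : 0 < r)
    (A Ξ Sg : ℝ → Fin 2 → Fin 2 → ℝ) (Sp Sm : Fin 2 → Fin 2 → ℝ)
    (e : Fin 2 → ℝ) (he : (e 0)^2 + (e 1)^2 = 1)
    (hAcont : Continuous A)
    (hΞderiv : ∀ t, HasDerivAt Ξ (-(1/4 : ℝ) • A t) t)
    (hSderiv : ∀ t, HasDerivAt Sg (-(Ξ t)) t)
    (hΞtop : Tendsto Ξ atTop (nhds 0)) (hΞbot : Tendsto Ξ atBot (nhds 0))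
    (hStop : Tendsto Sg atTop (nhds Sp)) (hSbot : Tendsto Sg atBot (nhds Sm))
    (x x' : ℝ → Fin 2 → ℝ)
    (hx : ∀ t, HasDerivAt x (x' t) t)
    (hx' : ∀ t, HasDerivAt x'
      ((d₀ / r) • (-(1/4 : ℝ)) • (fun i => ∑ j, A t i j * e j)) t)
    (hxbot : Tendsto x atBot (nhds (d₀ • e)))
    (hx'bot : Tendsto x' atBot (nhds 0)) :
    (∀ t, x' t = (d₀ / r) • fun i => ∑ j, Ξ t i j * e j) ∧
    Tendsto x' atTop (nhds 0) ∧
    Tendsto x atTop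
      (nhds (d₀ • e - (d₀ / r) • fun i => ∑ j, (Sp - Sm) i j * e j)) := by
  set φ : (Fin 2 → Fin 2 → ℝ) → (Fin 2 → ℝ) :=
    fun M => (d₀ / r) • fun i => ∑ j, M i j * e j with hφ
  have hφcont : Continuous φ := aux_cont _ e
  have hφ0 : φ 0 = 0 := by
    funext i; simp [hφ]
  -- derivative of φ ∘ Ξ
  have hΦderiv : ∀ t, HasDerivAt (fun s => φ (Ξ s))
      ((d₀ / r) • (-(1/4 : ℝ)) • (fun i => ∑ j, A t i j * e j)) t := by
    intro t
    have := aux_deriv e (d₀ / r) (hΞderiv t)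
    convert this using 1
    funext i
    simp only [Pi.smul_apply, Pi.neg_apply, smul_eq_mul, Fin.sum_univ_two]
    ring
  -- g = x' - φ ∘ Ξ is constant
  have hg : ∀ t, HasDerivAt (fun s => x' s - φ (Ξ s)) 0 t := by
    intro t
    have := (hx' t).fun_sub (hΦderiv t)
    simpa using this
  have hgconst : ∀ t, x' t - φ (Ξ t) = x' 0 - φ (Ξ 0) := by
    intro t
    exact is_const_of_deriv_eq_zero (fun s => (hg s).differentiableAt)
      (fun s => (hg s).deriv) t 0
  have hgbot : Tendsto (fun s => x' s - φ (Ξ s)) atBot (nhds 0) := by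
    have h2 : Tendsto (fun s => φ (Ξ s)) atBot (nhds (φ 0)) :=
      (hφcont.tendsto 0).comp hΞbot
    rw [hφ0] at h2
    simpa using hx'bot.sub h2
  have hg0 : x' 0 - φ (Ξ 0) = 0 := by
    have : Tendsto (fun _ : ℝ => x' 0 - φ (Ξ 0)) atBot (nhds 0) := by
      refine Tendsto.congr (fun s => hgconst s) hgbot
    exact tendsto_nhds_unique tendsto_const_nhds this
  have part1 : ∀ t, x' t = φ (Ξ t) := by
    intro t
    have := hgconst t
    rw [hg0] at this
    exact sub_eq_zero.mp this
  have part2 : Tendsto x' atTop (nhds 0) := by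
    have h2 : Tendsto (fun s => φ (Ξ s)) atTop (nhds (φ 0)) :=
      (hφcont.tendsto 0).comp hΞtop
    rw [hφ0] at h2
    exact Tendsto.congr (fun s => (part1 s).symm) h2
  refine ⟨part1, part2, ?_⟩
  -- h = x + φ ∘ Sg is constant
  have hhd : ∀ t, HasDerivAt (fun s => x s + φ (Sg s)) 0 t := by
    intro t
    have h1 := aux_deriv e (d₀ / r) (hSderiv t)
    have := (hx t).fun_add h1
    rw [part1 t] at this
    refine this.congr_deriv ?_
    funext i
    simp only [hφ, Pi.add_apply, Pi.smul_apply, Pi.neg_apply, smul_eq_mul,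
      Fin.sum_univ_two, Pi.zero_apply]
    ring
  have hhconst : ∀ t, x t + φ (Sg t) = x 0 + φ (Sg 0) := by
    intro t
    exact is_const_of_deriv_eq_zero (fun s => (hhd s).differentiableAt)
      (fun s => (hhd s).deriv) t 0
  have hhbot : Tendsto (fun s => x s + φ (Sg s)) atBot (nhds (d₀ • e + φ Sm)) :=
    hxbot.add ((hφcont.tendsto Sm).comp hSbot)
  have hh0 : x 0 + φ (Sg 0) = d₀ • e + φ Sm := by
    have : Tendsto (fun _ : ℝ => x 0 + φ (Sg 0)) atBot (nhds (d₀ • e + φ Sm)) :=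
      Tendsto.congr (fun s => hhconst s) hhbot
    exact tendsto_nhds_unique tendsto_const_nhds this
  have hxeq : ∀ t, x t = d₀ • e + φ Sm - φ (Sg t) := by
    intro t
    have := hhconst t
    rw [hh0] at this
    exact eq_sub_of_add_eq this
  have hlim : Tendsto x atTop (nhds (d₀ • e + φ Sm - φ Sp)) := by
    have h2 : Tendsto (fun s => φ (Sg s)) atTop (nhds (φ Sp)) :=
      (hφcont.tendsto Sp).comp hStop
    have : Tendsto (fun s => d₀ • e + φ Sm - φ (Sg s)) atTop
        (nhds (d₀ • e + φ Sm - φ Sp)) := tendsto_const_nhds.sub h2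
    exact Tendsto.congr (fun s => (hxeq s).symm) this
  convert hlim using 2
  funext i
  simp [hφ, Finset.sum_sub_distrib, mul_sub, sub_eq_iff_eq_add]
  ring
end

section
/- If χ̂ satisfies the propagation equation dχ̂/ds = -(tr χ) χ̂ - α along an affinely parametrized null geodesic generator, with tr χ = 2/s + O(s^{-2}) and |α(s)| ≤ C s^{-7/2}, then s² χ̂(s) converges to a limit as s → ∞. -/
open Filter

/-- If `χ̂` satisfies `dχ̂/ds = -(tr χ)χ̂ - α` along a null generator with
`tr χ = 2/s + O(s⁻²)` and `|α(s)| ≤ C s^{-7/2}`, then `s² χ̂(s)` converges as `s → ∞`. -/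
theorem normalized_shear_limit {V : Type*} [NormedAddCommGroup V] [NormedSpace ℝ V]
    [FiniteDimensional ℝ V]
    (s₀ C : ℝ) (hs₀ : 0 < s₀) (hC : 0 < C)
    (χ : ℝ → V) (trχ : ℝ → ℝ) (α : ℝ → V)
    (htrcont : ContinuousOn trχ (Set.Ici s₀))
    (hαcont : ContinuousOn α (Set.Ici s₀))
    (hderiv : ∀ s ≥ s₀, HasDerivAt χ (-(trχ s) • χ s - α s) s)
    (htr : ∀ s ≥ s₀, |trχ s - 2 / s| ≤ C / s ^ 2)
    (hα : ∀ s ≥ s₀, ‖α s‖ ≤ C * s ^ (-(7:ℝ)/2)) :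
    ∃ L : V, Tendsto (fun s => s ^ 2 • χ s) atTop (nhds L) := by
  classical
  set s₁ : ℝ := s₀ + 1 with hs₁def
  have hs01 : s₀ < s₁ := by simp [hs₁def]
  have hs₁pos : (0:ℝ) < s₁ := by linarith
  -- the correction term g
  set g : ℝ → ℝ := fun t => trχ t - 2 / t with hgdef
  have hgcont : ContinuousOn g (Set.Ici s₀) := by
    apply htrcont.sub
    exact ContinuousOn.div continuousOn_const continuousOn_id
      (fun t ht => ne_of_gt (lt_of_lt_of_le hs₀ ht))
  have hgcont' : ContinuousOn g (Set.Ioi s₀) := hgcont.mono Set.Ioi_subset_Ici_self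
  have huIcc : ∀ a b : ℝ, s₀ ≤ a → s₀ ≤ b → Set.uIcc a b ⊆ Set.Ici s₀ := by
    intro a b ha hb x hx
    rcases Set.mem_uIcc.mp hx with ⟨h1, _⟩ | ⟨h1, _⟩ <;> exact Set.mem_Ici.2 (by linarith)
  have hgInt : ∀ a b : ℝ, s₀ ≤ a → s₀ ≤ b →
      IntervalIntegrable g MeasureTheory.volume a b := by
    intro a b ha hb
    exact (hgcont.mono (huIcc a b ha hb)).intervalIntegrable
  set h : ℝ → ℝ := fun s => ∫ t in s₀..s, g t with hhdef
  have hderivh : ∀ s ∈ Set.Ioi s₀, HasDerivAt h (g s) s := by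
    intro s hs
    exact intervalIntegral.integral_hasDerivAt_right
      (hgInt s₀ s le_rfl (le_of_lt hs))
      (hgcont'.stronglyMeasurableAtFilter isOpen_Ioi s hs)
      (hgcont'.continuousAt (Ioi_mem_nhds hs))
  have hhcont : ContinuousOn h (Set.Ioi s₀) := fun s hs =>
    ((hderivh s hs).continuousAt).continuousWithinAt
  -- bound |h s| ≤ C / s₀ for s ≥ s₀
  have hgbound : ∀ t ≥ s₀, |g t| ≤ C / t ^ 2 := htr
  have hCint : ∀ s ≥ s₀, (∫ t in s₀..s, C / t ^ 2) = C / s₀ - C / s := by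
    intro s hs
    have hF : ∀ t ∈ Set.uIcc s₀ s, HasDerivAt (fun u => -(C / u)) (C / t ^ 2) t := by
      intro t ht
      have htpos : 0 < t := lt_of_lt_of_le hs₀ (huIcc s₀ s le_rfl hs ht)
      have := ((hasDerivAt_inv (ne_of_gt htpos)).const_mul C).neg
      rw [show (fun u => -(C / u)) = -fun y => C * y⁻¹ by funext u; simp [div_eq_mul_inv]]
      exact this.congr_deriv (by ring)
    have hint : IntervalIntegrable (fun t => C / t ^ 2) MeasureTheory.volume s₀ s := by
      apply ContinuousOn.intervalIntegrable
      apply ContinuousOn.div continuousOn_const (by fun_prop)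
      intro t ht
      exact pow_ne_zero _ (ne_of_gt (lt_of_lt_of_le hs₀ (huIcc s₀ s le_rfl hs ht)))
    rw [intervalIntegral.integral_eq_sub_of_hasDerivAt hF hint]
    ring
  have habs : ∀ s ≥ s₀, |h s| ≤ C / s₀ := by
    intro s hs
    have h1 : |h s| ≤ ∫ t in s₀..s, |g t| :=
      intervalIntegral.abs_integral_le_integral_abs hs
    have h2 : (∫ t in s₀..s, |g t|) ≤ ∫ t in s₀..s, C / t ^ 2 := by
      apply intervalIntegral.integral_mono_on hs ((hgInt s₀ s le_rfl hs).abs)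
      · apply ContinuousOn.intervalIntegrable
        apply ContinuousOn.div continuousOn_const (by fun_prop)
        intro t ht
        exact pow_ne_zero _ (ne_of_gt (lt_of_lt_of_le hs₀ (huIcc s₀ s le_rfl hs ht)))
      · intro t ht
        exact hgbound t ht.1
    have h3 := hCint s hs
    have hspos : 0 < s := lt_of_lt_of_le hs₀ hs
    have : C / s > 0 := div_pos hC hspos
    calc |h s| ≤ ∫ t in s₀..s, C / t ^ 2 := le_trans h1 h2
      _ = C / s₀ - C / s := h3
      _ ≤ C / s₀ := by linarith
  have hexp_bound : ∀ s ≥ s₀, Real.exp (h s) ≤ Real.exp (C / s₀) :=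
    fun s hs => Real.exp_le_exp.2 (le_trans (le_abs_self _) (habs s hs))
  -- the renormalized quantity w
  set w : ℝ → V := fun s => Real.exp (h s) • ((s ^ 2 : ℝ) • χ s) with hwdef
  set w' : ℝ → V := fun s => (-(Real.exp (h s) * s ^ 2)) • α s with hw'def
  have hderivw : ∀ s ∈ Set.Ioi s₀, HasDerivAt w (w' s) s := by
    intro s hs
    have hspos : 0 < s := lt_trans hs₀ hs
    have h1 : HasDerivAt (fun u => Real.exp (h u)) (Real.exp (h s) * g s) s :=
      (hderivh s hs).exp
    have h2 : HasDerivAt (fun u : ℝ => (u ^ 2 : ℝ)) (2 * s) s := by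
      simpa using (hasDerivAt_pow 2 s)
    have h3 := h2.smul (hderiv s (le_of_lt hs))
    have h4 := h1.smul h3
    convert h4 using 1
    show (-(Real.exp (h s) * s ^ 2)) • α s
      = Real.exp (h s) • ((s ^ 2 : ℝ) • (-(trχ s) • χ s - α s) + (2 * s) • χ s)
        + (Real.exp (h s) * g s) • ((s ^ 2 : ℝ) • χ s)
    have hgs : g s = trχ s - 2 / s := rfl
    rw [hgs]
    have hsne : s ≠ 0 := ne_of_gt hspos
    match_scalars <;> (field_simp; try ring)
    rfl
  have hwcont : ContinuousOn w' (Set.Ioi s₀) := by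
    apply ContinuousOn.smul
    · apply ContinuousOn.neg
      exact ((Real.continuous_exp.comp_continuousOn hhcont).mul (by fun_prop))
    · exact hαcont.mono Set.Ioi_subset_Ici_self
  -- integrability of w' on (s₁, ∞)
  have hw'bound : ∀ t ≥ s₁, ‖w' t‖ ≤ (Real.exp (C / s₀) * C) * t ^ (-(3:ℝ)/2) := by
    intro t ht
    have hts₀ : s₀ ≤ t := le_trans (le_of_lt hs01) ht
    have htpos : 0 < t := lt_of_lt_of_le hs₁pos ht
    have h1 : ‖w' t‖ = (Real.exp (h t) * t ^ 2) * ‖α t‖ := by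
      rw [hw'def]
      rw [norm_smul, norm_neg, Real.norm_eq_abs, abs_of_pos
        (by positivity : (0:ℝ) < Real.exp (h t) * t ^ 2)]
    rw [h1]
    have h2 : Real.exp (h t) * t ^ 2 * ‖α t‖
        ≤ Real.exp (C / s₀) * t ^ 2 * (C * t ^ (-(7:ℝ)/2)) := by
      apply mul_le_mul _ (hα t hts₀) (norm_nonneg _) (by positivity)
      exact mul_le_mul_of_nonneg_right (hexp_bound t hts₀) (by positivity)
    refine le_trans h2 (le_of_eq ?_)
    have h3 : (t:ℝ) ^ 2 * t ^ (-(7:ℝ)/2) = t ^ (-(3:ℝ)/2) := by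
      rw [← Real.rpow_natCast t 2, ← Real.rpow_add htpos]
      norm_num
    calc Real.exp (C / s₀) * t ^ 2 * (C * t ^ (-(7:ℝ)/2))
        = (Real.exp (C / s₀) * C) * (t ^ 2 * t ^ (-(7:ℝ)/2)) := by ring
      _ = (Real.exp (C / s₀) * C) * t ^ (-(3:ℝ)/2) := by rw [h3]
  have hw'int : MeasureTheory.IntegrableOn w' (Set.Ioi s₁) := by
    have hmeas : MeasureTheory.AEStronglyMeasurable w'
        (MeasureTheory.volume.restrict (Set.Ioi s₁)) := by
      apply ContinuousOn.aestronglyMeasurable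
        (hwcont.mono (fun x hx => lt_trans hs01 hx)) measurableSet_Ioi
    have hbig : MeasureTheory.IntegrableOn
        (fun t : ℝ => (Real.exp (C / s₀) * C) * t ^ (-(3:ℝ)/2)) (Set.Ioi s₁) := by
      exact (integrableOn_Ioi_rpow_of_lt (by norm_num) hs₁pos).const_mul _
    apply MeasureTheory.Integrable.mono' hbig hmeas
    filter_upwards [MeasureTheory.ae_restrict_mem measurableSet_Ioi] with t ht
    exact hw'bound t (le_of_lt ht)
  -- w converges
  have hwInt : ∀ b ≥ s₁, IntervalIntegrable w' MeasureTheory.volume s₁ b := by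
    intro b hb
    apply (hwcont.mono ?_).intervalIntegrable
    intro x hx
    rcases Set.mem_uIcc.mp hx with ⟨h1, _⟩ | ⟨h1, _⟩ <;>
      exact Set.mem_Ioi.2 (by linarith)
  have hFTC : ∀ b ≥ s₁, w b = w s₁ + ∫ t in s₁..b, w' t := by
    intro b hb
    have := intervalIntegral.integral_eq_sub_of_hasDerivAt
      (f := w) (f' := w') (a := s₁) (b := b) ?_ (hwInt b hb)
    · rw [this]; abel
    · intro x hx
      apply hderivw
      rcases Set.mem_uIcc.mp hx with ⟨h1, _⟩ | ⟨h1, _⟩ <;>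
        exact Set.mem_Ioi.2 (by linarith)
  have hwtend : Tendsto w atTop (nhds (w s₁ + ∫ t in Set.Ioi s₁, w' t)) := by
    have h1 : Tendsto (fun b => w s₁ + ∫ t in s₁..b, w' t) atTop
        (nhds (w s₁ + ∫ t in Set.Ioi s₁, w' t)) :=
      tendsto_const_nhds.add
        (MeasureTheory.intervalIntegral_tendsto_integral_Ioi s₁ hw'int tendsto_id)
    apply h1.congr'
    filter_upwards [eventually_ge_atTop s₁] with b hb
    exact (hFTC b hb).symm
  -- h converges
  have hgint' : MeasureTheory.IntegrableOn g (Set.Ioi s₁) := by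
    have hmeas : MeasureTheory.AEStronglyMeasurable g
        (MeasureTheory.volume.restrict (Set.Ioi s₁)) :=
      ContinuousOn.aestronglyMeasurable
        (hgcont'.mono (fun x hx => lt_trans hs01 hx)) measurableSet_Ioi
    have hbig : MeasureTheory.IntegrableOn
        (fun t : ℝ => C * t ^ (-(2:ℝ))) (Set.Ioi s₁) :=
      (integrableOn_Ioi_rpow_of_lt (by norm_num) hs₁pos).const_mul _
    apply MeasureTheory.Integrable.mono' hbig hmeas
    filter_upwards [MeasureTheory.ae_restrict_mem measurableSet_Ioi] with t ht
    have htpos : 0 < t := lt_trans hs₁pos ht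
    have : C / t ^ 2 = C * t ^ (-(2:ℝ)) := by
      rw [Real.rpow_neg (le_of_lt htpos), Real.rpow_two]
      ring
    rw [Real.norm_eq_abs, ← this]
    exact hgbound t (le_trans (le_of_lt hs01) (le_of_lt ht))
  have hhsplit : ∀ b ≥ s₁, h b = h s₁ + ∫ t in s₁..b, g t := by
    intro b hb
    have := intervalIntegral.integral_add_adjacent_intervals
      (hgInt s₀ s₁ le_rfl (le_of_lt hs01))
      (hgInt s₁ b (le_of_lt hs01) (le_trans (le_of_lt hs01) hb))
    rw [hhdef]
    simp only
    rw [← this]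
  have hhtend : Tendsto h atTop (nhds (h s₁ + ∫ t in Set.Ioi s₁, g t)) := by
    have h1 : Tendsto (fun b => h s₁ + ∫ t in s₁..b, g t) atTop
        (nhds (h s₁ + ∫ t in Set.Ioi s₁, g t)) :=
      tendsto_const_nhds.add
        (MeasureTheory.intervalIntegral_tendsto_integral_Ioi s₁ hgint' tendsto_id)
    apply h1.congr'
    filter_upwards [eventually_ge_atTop s₁] with b hb
    exact (hhsplit b hb).symm
  -- combine
  set H : ℝ := h s₁ + ∫ t in Set.Ioi s₁, g t with hHdef
  set Lw : V := w s₁ + ∫ t in Set.Ioi s₁, w' t with hLwdef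
  refine ⟨Real.exp (-H) • Lw, ?_⟩
  have hexp : Tendsto (fun s => Real.exp (-(h s))) atTop (nhds (Real.exp (-H))) :=
    (Real.continuous_exp.tendsto _).comp hhtend.neg
  have hfinal : Tendsto (fun s => Real.exp (-(h s)) • w s) atTop
      (nhds (Real.exp (-H) • Lw)) := hexp.smul hwtend
  apply hfinal.congr
  intro s
  rw [hwdef]
  simp only
  rw [smul_smul, ← Real.exp_add]
  simp
end
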